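/- If X and Y are subsets of the positive integers with X ∩ Y = ∅, then for all n ≥ 1 and all k ≥ 0, the number of permutations of [n] with exactly k (X,Y)-place-value pairs equals the number of permutations of [n] with exactly k (X,Y)-adjacencies, i.e. V_{n,k}^{X,Y} = A_{n,k}^{X,Y}. -/
import Mathlib


/-- `val_{X,Y}(σ)`: number of positions `i ∈ [n]` with `i ∈ X` and `σ_i ∈ Y`
(positions and values of `Fin n` are identified with `{1, ..., n}` via `i ↦ i + 1`). -/
noncomputable def valCount (X Y : Set ℕ) (n : ℕ) (σ : Equiv.Perm (Fin n)) : ℕ :=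
  {i : Fin n | ((i : ℕ) + 1) ∈ X ∧ (((σ i : ℕ)) + 1) ∈ Y}.ncard

/-- `V_{n,k}^{X,Y}`: the number of permutations of `[n]` with exactly `k`
`(X,Y)`-place-value pairs. -/
noncomputable def V (X Y : Set ℕ) (n k : ℕ) : ℕ :=
  Nat.card {σ : Equiv.Perm (Fin n) | valCount X Y n σ = k}

/-- `adj_{X,Y}(σ)`: number of `i` with `σ_i ∈ X` and `σ_{i+1} ∈ Y`
(positions and values of `Fin n` are identified with `{1, ..., n}` via `i ↦ i + 1`). -/
noncomputable def adjCount (X Y : Set ℕ) (n : ℕ) (σ : Equiv.Perm (Fin n)) : ℕ :=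
  {i : Fin n | ∃ h : (i : ℕ) + 1 < n,
    ((σ i : ℕ) + 1) ∈ X ∧ ((σ ⟨(i : ℕ) + 1, h⟩ : ℕ) + 1) ∈ Y}.ncard

/-- `A_{n,s}^{X,Y}`: the number of permutations of `[n]` with exactly `s`
`(X,Y)`-adjacencies. -/
noncomputable def A (X Y : Set ℕ) (n s : ℕ) : ℕ :=
  Nat.card {σ : Equiv.Perm (Fin n) | adjCount X Y n σ = s}


open Finset

open scoped Classical

/-- indicator of a proposition -/
noncomputable def ind (P : Prop) : ℕ := if P then 1 else 0

lemma ind_le_one (P : Prop) : ind P ≤ 1 := by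
  unfold ind; split <;> omega

lemma ind_congr {P Q : Prop} (h : P ↔ Q) : ind P = ind Q := by
  unfold ind; simp [h]

lemma ind_true {P : Prop} (h : P) : ind P = 1 := if_pos h
lemma ind_false {P : Prop} (h : ¬ P) : ind P = 0 := if_neg h

/-- the word of a permutation, as a function `ℕ → ℕ` (1-indexed values, `0` out of range) -/
noncomputable def word (n : ℕ) (σ : Equiv.Perm (Fin n)) (j : ℕ) : ℕ :=
  if h : j < n then (σ ⟨j, h⟩ : ℕ) + 1 else 0

lemma word_lt {n : ℕ} (σ : Equiv.Perm (Fin n)) (j : ℕ) (h : j < n) :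
    word n σ j = (σ ⟨j, h⟩ : ℕ) + 1 := dif_pos h

lemma word_ge {n : ℕ} (σ : Equiv.Perm (Fin n)) (j : ℕ) (h : ¬ j < n) :
    word n σ j = 0 := dif_neg h

/-- number of (X,Y) place-value pairs, word version -/
noncomputable def vsN (X Y : Set ℕ) (n : ℕ) (σ : Equiv.Perm (Fin n)) : ℕ :=
  ∑ j ∈ range n, ind (j + 1 ∈ X ∧ word n σ j ∈ Y)

/-- number of (X,Y) adjacencies, word version -/
noncomputable def asN (X Y : Set ℕ) (n : ℕ) (σ : Equiv.Perm (Fin n)) : ℕ :=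
  ∑ j ∈ range n, ind (word n σ j ∈ X ∧ word n σ (j + 1) ∈ Y)

/-- insert the value `n` at position `q` into (the word of) `ρ` -/
noncomputable def ins {n : ℕ} (q : Fin (n + 1)) (ρ : Equiv.Perm (Fin n)) :
    Equiv.Perm (Fin (n + 1)) :=
  ((finSuccEquiv' q).trans ρ.optionCongr).trans (finSuccEquiv' (Fin.last n)).symm

lemma ins_apply_self {n : ℕ} (q : Fin (n + 1)) (ρ : Equiv.Perm (Fin n)) :
    ins q ρ q = Fin.last n := by
  simp [ins, finSuccEquiv'_at, finSuccEquiv'_symm_none]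

lemma ins_apply_succAbove {n : ℕ} (q : Fin (n + 1)) (ρ : Equiv.Perm (Fin n)) (i : Fin n) :
    ins q ρ (q.succAbove i) = (ρ i).castSucc := by
  simp only [ins, Equiv.trans_apply, finSuccEquiv'_succAbove, Equiv.optionCongr_apply,
    Option.map_some, finSuccEquiv'_symm_some]
  rw [Fin.succAbove_last]

/-- the permutation `σ` with `σ (p) = n`, `σ (last) = e p`, `σ j = e j` otherwise -/
noncomputable def evalP {n : ℕ} (p : Fin (n + 1)) (e : Equiv.Perm (Fin n)) :
    Equiv.Perm (Fin (n + 1)) :=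
  (ins (Fin.last n) e) * (Equiv.swap p (Fin.last n))

lemma ins_last_apply_castSucc {n : ℕ} (e : Equiv.Perm (Fin n)) (i : Fin n) :
    ins (Fin.last n) e i.castSucc = (e i).castSucc := by
  have := ins_apply_succAbove (Fin.last n) e i
  rwa [Fin.succAbove_last] at this

lemma word_ins {n : ℕ} (q : Fin (n + 1)) (ρ : Equiv.Perm (Fin n)) (j : ℕ) :
    word (n + 1) (ins q ρ) j =
      if j < (q : ℕ) then word n ρ j
      else if j = (q : ℕ) then n + 1
      else word n ρ (j - 1) := by
  have hq : (q : ℕ) < n + 1 := q.isLt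
  by_cases h1 : j < (q : ℕ)
  · have hjn : j < n := by omega
    have hj : j < n + 1 := by omega
    rw [if_pos h1, word_lt _ j hj, word_lt _ j hjn]
    have : (⟨j, hj⟩ : Fin (n + 1)) = q.succAbove ⟨j, hjn⟩ := by
      rw [Fin.succAbove_of_castSucc_lt]
      · rfl
      · exact h1
    rw [this, ins_apply_succAbove]
    rfl
  · by_cases h2 : j = (q : ℕ)
    · rw [if_neg h1, if_pos h2]
      have hj : j < n + 1 := by omega
      rw [word_lt _ j hj]
      have : (⟨j, hj⟩ : Fin (n + 1)) = q := by
        apply Fin.ext; simpa using h2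
      rw [this, ins_apply_self]
      simp [Fin.last]
    · rw [if_neg h1, if_neg h2]
      by_cases h3 : j < n + 1
      · have hj1 : j - 1 < n := by omega
        rw [word_lt _ j h3, word_lt _ (j - 1) hj1]
        have : (⟨j, h3⟩ : Fin (n + 1)) = q.succAbove ⟨j - 1, hj1⟩ := by
          rw [Fin.succAbove_of_le_castSucc]
          · apply Fin.ext; simp [Fin.val_succ]; omega
          · rw [Fin.le_castSucc_iff]
            apply Fin.lt_def.mpr
            simp; omega
        rw [this, ins_apply_succAbove]
        rfl
      · rw [word_ge _ j h3, word_ge]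
        omega

lemma word_evalP {n : ℕ} (p : Fin (n + 1)) (e : Equiv.Perm (Fin n)) (i : ℕ) :
    word (n + 1) (evalP p e) i =
      if i = (p : ℕ) then n + 1
      else if i = n then word n e (p : ℕ)
      else word n e i := by
  have hp : (p : ℕ) < n + 1 := p.isLt
  by_cases h1 : i = (p : ℕ)
  · rw [if_pos h1]
    have hi : i < n + 1 := by omega
    rw [word_lt _ i hi]
    have hip : (⟨i, hi⟩ : Fin (n + 1)) = p := by apply Fin.ext; simpa using h1
    show ((ins (Fin.last n) e) ((Equiv.swap p (Fin.last n)) ⟨i, hi⟩) : ℕ) + 1 = n + 1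
    rw [hip, Equiv.swap_apply_left, ins_apply_self]
    simp [Fin.last]
  · by_cases h2 : i = n
    · rw [if_neg h1, if_pos h2]
      have hi : i < n + 1 := by omega
      have hpn : (p : ℕ) < n := by omega
      rw [word_lt _ i hi, word_lt _ (p : ℕ) hpn]
      have hil : (⟨i, hi⟩ : Fin (n + 1)) = Fin.last n := by apply Fin.ext; simpa using h2
      show ((ins (Fin.last n) e) ((Equiv.swap p (Fin.last n)) ⟨i, hi⟩) : ℕ) + 1 = _
      rw [hil, Equiv.swap_apply_right]
      have hpc : p = (⟨(p : ℕ), hpn⟩ : Fin n).castSucc := by apply Fin.ext; rfl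
      have h4 : ins (Fin.last n) e p = (e ⟨(p : ℕ), hpn⟩).castSucc := by
        conv_lhs => rw [hpc]
        exact ins_last_apply_castSucc e _
      rw [h4]
      rfl
    · rw [if_neg h1, if_neg h2]
      by_cases h3 : i < n + 1
      · have hin : i < n := by omega
        rw [word_lt _ i h3, word_lt _ i hin]
        show ((ins (Fin.last n) e) ((Equiv.swap p (Fin.last n)) ⟨i, h3⟩) : ℕ) + 1 = _
        rw [Equiv.swap_apply_of_ne_of_ne]
        · have : (⟨i, h3⟩ : Fin (n + 1)) = (⟨i, hin⟩ : Fin n).castSucc := by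
            apply Fin.ext; rfl
          rw [this, ins_last_apply_castSucc]
          rfl
        · intro hc; apply h1; rw [← hc]
        · intro hc; apply h2
          have := congrArg Fin.val hc
          simpa using this
      · rw [word_ge _ i h3, word_ge]
        omega

lemma ins_bijective {n : ℕ} :
    Function.Bijective (fun x : Fin (n + 1) × Equiv.Perm (Fin n) => ins x.1 x.2) := by
  rw [Fintype.bijective_iff_injective_and_card]
  constructor
  · rintro ⟨q, ρ⟩ ⟨q', ρ'⟩ h
    simp only at h
    have hq : q = q' := by
      have h1 : ins q' ρ' q = Fin.last n := by rw [← h]; exact ins_apply_self q ρ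
      have h2 : ins q' ρ' q' = Fin.last n := ins_apply_self q' ρ'
      exact (ins q' ρ').injective (h1.trans h2.symm)
    subst hq
    have hρ : ρ = ρ' := by
      apply Equiv.ext
      intro i
      have h1 : ins q ρ (q.succAbove i) = ins q ρ' (q.succAbove i) := by rw [h]
      rw [ins_apply_succAbove, ins_apply_succAbove] at h1
      exact Fin.castSucc_injective n h1
    rw [hρ]
  · simp [Fintype.card_perm, Nat.factorial_succ, Nat.mul_comm]

lemma evalP_bijective {n : ℕ} :
    Function.Bijective (fun x : Fin (n + 1) × Equiv.Perm (Fin n) => evalP x.1 x.2) := by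
  rw [Fintype.bijective_iff_injective_and_card]
  constructor
  · rintro ⟨p, e⟩ ⟨p', e'⟩ h
    simp only [evalP] at h
    have key : ∀ (p : Fin (n + 1)) (e : Equiv.Perm (Fin n)),
        (ins (Fin.last n) e * Equiv.swap p (Fin.last n)) p = Fin.last n := by
      intro p e
      rw [Equiv.Perm.mul_apply, Equiv.swap_apply_left, ins_apply_self]
    have hp : p = p' := by
      have h1 : (ins (Fin.last n) e' * Equiv.swap p' (Fin.last n)) p = Fin.last n := by
        rw [← h]; exact key p e
      have h2 := key p' e'
      exact (ins (Fin.last n) e' * Equiv.swap p' (Fin.last n)).injective (h1.trans h2.symm)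
    subst hp
    have he : ins (Fin.last n) e = ins (Fin.last n) e' := mul_right_cancel h
    have := ins_bijective (n := n) |>.injective
      (show (fun x : Fin (n+1) × Equiv.Perm (Fin n) => ins x.1 x.2) (Fin.last n, e)
          = (fun x => ins x.1 x.2) (Fin.last n, e') from he)
    simp only [Prod.mk.injEq] at this
    rw [this.2]
  · simp [Fintype.card_perm, Nat.factorial_succ, Nat.mul_comm]

/-- counting lemma: summing an indicator of `a + t i = b` for a 0/1-valued `t` -/
lemma cnt (m a b : ℕ) (t : ℕ → ℕ) (ht : ∀ i, t i ≤ 1) :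
    ∑ i ∈ range m, ind (a + t i = b) =
      (if b = a then m - (∑ i ∈ range m, t i) else 0) +
      (if b = a + 1 then (∑ i ∈ range m, t i) else 0) := by
  induction m with
  | zero => simp
  | succ m ih =>
    have hS : (∑ i ∈ range m, t i) ≤ m := by
      calc (∑ i ∈ range m, t i) ≤ ∑ _i ∈ range m, 1 :=
        Finset.sum_le_sum (fun i _ => ht i)
      _ = m := by simp
    rw [Finset.sum_range_succ (fun x => ind (a + t x = b)), Finset.sum_range_succ t, ih]
    have htm := ht m
    rcases Nat.le_one_iff_eq_zero_or_eq_one.mp htm with h0 | h1 <;>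
      [rw [h0]; rw [h1]] <;> simp only [ind] <;> split_ifs <;> omega

section Pointwise

variable (X Y : Set ℕ)

lemma vL1 {n : ℕ} (e : Equiv.Perm (Fin n)) :
    vsN X Y (n + 1) (evalP (Fin.last n) e) =
      vsN X Y n e + ind ((n + 1 : ℕ) ∈ X ∧ (n + 1 : ℕ) ∈ Y) := by
  unfold vsN
  rw [Finset.sum_range_succ]
  congr 1
  · apply Finset.sum_congr rfl
    intro j hj
    rw [Finset.mem_range] at hj
    apply ind_congr
    rw [word_evalP]
    have : (Fin.last n : Fin (n+1)).val = n := rfl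
    rw [this, if_neg (by omega), if_neg (by omega)]
  · apply ind_congr
    rw [word_evalP]
    have : (Fin.last n : Fin (n+1)).val = n := rfl
    rw [this, if_pos rfl]

lemma vL2 {n : ℕ} (e : Equiv.Perm (Fin n)) (p : Fin (n + 1)) (hp : (p : ℕ) < n) :
    vsN X Y (n + 1) (evalP p e) + ind ((p : ℕ) + 1 ∈ X ∧ word n e (p : ℕ) ∈ Y) =
      vsN X Y n e + ind ((p : ℕ) + 1 ∈ X ∧ (n + 1 : ℕ) ∈ Y)
        + ind ((n + 1 : ℕ) ∈ X ∧ word n e (p : ℕ) ∈ Y) := by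
  unfold vsN
  rw [Finset.sum_range_succ]
  have hmem : (p : ℕ) ∈ range n := Finset.mem_range.mpr hp
  rw [← Finset.sum_filter_add_sum_filter_not (range n) (fun j => j = (p : ℕ))]
  rw [← Finset.sum_filter_add_sum_filter_not (range n) (fun j => j = (p : ℕ))
    (fun j => ind (j + 1 ∈ X ∧ word n e j ∈ Y))]
  have hfil : Finset.filter (fun j => j = (p : ℕ)) (range n) = {(p : ℕ)} := by
    rw [Finset.filter_eq']
    exact if_pos hmem
  rw [hfil, Finset.sum_singleton, Finset.sum_singleton]
  have hrest : ∑ j ∈ Finset.filter (fun j => ¬ j = (p : ℕ)) (range n),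
      ind (j + 1 ∈ X ∧ word (n+1) (evalP p e) j ∈ Y)
      = ∑ j ∈ Finset.filter (fun j => ¬ j = (p : ℕ)) (range n),
      ind (j + 1 ∈ X ∧ word n e j ∈ Y) := by
    apply Finset.sum_congr rfl
    intro j hj
    rw [Finset.mem_filter, Finset.mem_range] at hj
    apply ind_congr
    rw [word_evalP, if_neg hj.2, if_neg (by omega)]
  rw [hrest]
  have h1 : word (n+1) (evalP p e) (p : ℕ) = n + 1 := by
    rw [word_evalP, if_pos rfl]
  have h2 : word (n+1) (evalP p e) n = word n e (p : ℕ) := by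
    rw [word_evalP, if_neg (by omega), if_pos rfl]
  rw [h1, h2]
  omega

lemma aL2 {n : ℕ} (ρ : Equiv.Perm (Fin n)) (q : Fin (n + 1)) :
    asN X Y (n + 1) (ins q ρ) +
      ind (1 ≤ (q : ℕ) ∧ word n ρ ((q : ℕ) - 1) ∈ X ∧ word n ρ (q : ℕ) ∈ Y) =
    asN X Y n ρ +
      ind (1 ≤ (q : ℕ) ∧ word n ρ ((q : ℕ) - 1) ∈ X ∧ (n + 1 : ℕ) ∈ Y) +
      ind ((n + 1 : ℕ) ∈ X ∧ word n ρ (q : ℕ) ∈ Y) := by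
  obtain ⟨Q, hQ⟩ : ∃ Q, (q : ℕ) = Q := ⟨_, rfl⟩
  set w := word n ρ with hw
  set W := word (n + 1) (ins q ρ) with hW
  rw [hQ]
  have hQn : Q ≤ n := by have := q.isLt; omega
  have hWlt : ∀ j, j < Q → W j = w j := by
    intro j hj; rw [hW, word_ins, hQ, if_pos hj]
  have hWeq : W Q = n + 1 := by rw [hW, word_ins, hQ, if_neg (by omega), if_pos rfl]
  have hWgt : ∀ j, Q < j → W j = w (j - 1) := by
    intro j hj; rw [hW, word_ins, hQ, if_neg (by omega), if_neg (by omega)]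
  -- split asN (n+1)
  have e1 : asN X Y (n + 1) (ins q ρ) =
      (∑ j ∈ range Q, ind (W j ∈ X ∧ W (j + 1) ∈ Y)) +
      (ind (W Q ∈ X ∧ W (Q + 1) ∈ Y) +
        ∑ j ∈ Finset.Ico (Q + 1) (n + 1), ind (W j ∈ X ∧ W (j + 1) ∈ Y)) := by
    unfold asN
    rw [← Finset.sum_range_add_sum_Ico _ (show Q ≤ n + 1 by omega),
      Finset.sum_eq_sum_Ico_succ_bot (show Q < n + 1 by omega)]
  have e2 : ∑ j ∈ Finset.Ico (Q + 1) (n + 1), ind (W j ∈ X ∧ W (j + 1) ∈ Y)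
      = ∑ j ∈ Finset.Ico Q n, ind (w j ∈ X ∧ w (j + 1) ∈ Y) := by
    rw [Finset.sum_Ico_eq_sum_range, Finset.sum_Ico_eq_sum_range]
    have : n + 1 - (Q + 1) = n - Q := by omega
    rw [this]
    apply Finset.sum_congr rfl
    intro i _
    apply ind_congr
    rw [hWgt (Q + 1 + i) (by omega), hWgt (Q + 1 + i + 1) (by omega)]
    have a1 : Q + 1 + i - 1 = Q + i := by omega
    have a2 : Q + 1 + i + 1 - 1 = Q + i + 1 := by omega
    rw [a1, a2]
  have e3 : asN X Y n ρ = (∑ j ∈ range Q, ind (w j ∈ X ∧ w (j + 1) ∈ Y)) +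
      ∑ j ∈ Finset.Ico Q n, ind (w j ∈ X ∧ w (j + 1) ∈ Y) := by
    unfold asN
    rw [Finset.sum_range_add_sum_Ico _ hQn]
  have hWQ1 : W (Q + 1) = w Q := by
    rw [hWgt (Q + 1) (by omega)]
    have : Q + 1 - 1 = Q := by omega
    rw [this]
  rcases Nat.eq_zero_or_pos Q with hQ0 | hQpos
  · -- Q = 0
    subst hQ0
    rw [e1, e2, e3]
    rw [hWeq, hWQ1]
    simp only [Finset.range_zero, Finset.sum_empty]
    have : ind (1 ≤ 0 ∧ w (0 - 1) ∈ X ∧ w 0 ∈ Y) = 0 := ind_false (by omega)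
    have h2 : ind (1 ≤ 0 ∧ w (0 - 1) ∈ X ∧ (n + 1 : ℕ) ∈ Y) = 0 := ind_false (by omega)
    rw [this, h2]
    omega
  · -- Q ≥ 1
    obtain ⟨Q', rfl⟩ : ∃ Q'', Q = Q'' + 1 := ⟨Q - 1, by omega⟩
    rw [e1, e2, e3]
    rw [hWeq, hWQ1]
    rw [Finset.sum_range_succ (fun j => ind (W j ∈ X ∧ W (j + 1) ∈ Y)),
      Finset.sum_range_succ (fun j => ind (w j ∈ X ∧ w (j + 1) ∈ Y))]
    have efirst : ∑ j ∈ range Q', ind (W j ∈ X ∧ W (j + 1) ∈ Y)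
        = ∑ j ∈ range Q', ind (w j ∈ X ∧ w (j + 1) ∈ Y) := by
      apply Finset.sum_congr rfl
      intro j hj
      rw [Finset.mem_range] at hj
      apply ind_congr
      rw [hWlt j (by omega), hWlt (j + 1) (by omega)]
    rw [efirst]
    have elast : ind (W Q' ∈ X ∧ W (Q' + 1) ∈ Y) = ind (w Q' ∈ X ∧ (n + 1 : ℕ) ∈ Y) := by
      apply ind_congr
      rw [hWlt Q' (by omega), hWeq]
    rw [elast]
    have s1 : Q' + 1 - 1 = Q' := by omega
    rw [s1]
    have i1 : ind (1 ≤ Q' + 1 ∧ w Q' ∈ X ∧ w (Q' + 1) ∈ Y) = ind (w Q' ∈ X ∧ w (Q' + 1) ∈ Y) :=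
      ind_congr (by constructor <;> intro h <;> [exact h.2; exact ⟨by omega, h⟩])
    have i2 : ind (1 ≤ Q' + 1 ∧ w Q' ∈ X ∧ (n + 1 : ℕ) ∈ Y)
        = ind (w Q' ∈ X ∧ (n + 1 : ℕ) ∈ Y) :=
      ind_congr (by constructor <;> intro h <;> [exact h.2; exact ⟨by omega, h⟩])
    rw [i1, i2]
    omega

end Pointwise

section Helpers

variable (X Y : Set ℕ)

lemma sum_word_mem (S : Set ℕ) (n : ℕ) (e : Equiv.Perm (Fin n)) :
    ∑ j ∈ range n, ind (word n e j ∈ S) = ∑ j ∈ range n, ind ((j + 1 : ℕ) ∈ S) := by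
  rw [← Fin.sum_univ_eq_sum_range (fun j => ind (word n e j ∈ S)) n,
    ← Fin.sum_univ_eq_sum_range (fun j => ind ((j + 1 : ℕ) ∈ S)) n]
  rw [← Equiv.sum_comp e (fun v : Fin n => ind (((v : ℕ) + 1 : ℕ) ∈ S))]
  apply Finset.sum_congr rfl
  intro i _
  apply ind_congr
  rw [word_lt _ _ i.isLt]

lemma vsN_le (n : ℕ) (σ : Equiv.Perm (Fin n)) : vsN X Y n σ ≤ n := by
  unfold vsN
  calc ∑ j ∈ range n, ind (j + 1 ∈ X ∧ word n σ j ∈ Y)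
      ≤ ∑ _j ∈ range n, 1 := Finset.sum_le_sum (fun i _ => ind_le_one _)
    _ = n := by simp

lemma asN_le (n : ℕ) (σ : Equiv.Perm (Fin n)) : asN X Y n σ ≤ n := by
  unfold asN
  calc ∑ j ∈ range n, ind (word n σ j ∈ X ∧ word n σ (j + 1) ∈ Y)
      ≤ ∑ _j ∈ range n, 1 := Finset.sum_le_sum (fun i _ => ind_le_one _)
    _ = n := by simp

/-- decrement version of the inner count -/
lemma inner_countA {n k s : ℕ} (F : Fin (n + 1) → ℕ) (t : ℕ → ℕ)
    (hF : ∀ p : Fin (n + 1), F p + t (p : ℕ) = s) (ht : ∀ Q, t Q ≤ 1) :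
    ∑ p : Fin (n + 1), ind (F p = k) =
      (if s = k then (n + 1) - (∑ Q ∈ range (n + 1), t Q) else 0) +
      (if s = k + 1 then (∑ Q ∈ range (n + 1), t Q) else 0) := by
  have step : ∀ p : Fin (n + 1), ind (F p = k) = ind (k + t (p : ℕ) = s) := by
    intro p
    apply ind_congr
    have := hF p
    omega
  rw [Finset.sum_congr rfl (fun p _ => step p)]
  rw [Fin.sum_univ_eq_sum_range (fun Q => ind (k + t Q = s)) (n + 1)]
  exact cnt (n + 1) k s t ht

/-- increment version of the inner count -/
lemma inner_countB {n k s : ℕ} (F : Fin (n + 1) → ℕ) (u : ℕ → ℕ)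
    (hF : ∀ p : Fin (n + 1), F p = s + u (p : ℕ)) (hu : ∀ Q, u Q ≤ 1) :
    ∑ p : Fin (n + 1), ind (F p = k) =
      (if k = s then (n + 1) - (∑ Q ∈ range (n + 1), u Q) else 0) +
      (if k = s + 1 then (∑ Q ∈ range (n + 1), u Q) else 0) := by
  have step : ∀ p : Fin (n + 1), ind (F p = k) = ind (s + u (p : ℕ) = k) := by
    intro p
    apply ind_congr
    have := hF p
    omega
  rw [Finset.sum_congr rfl (fun p _ => step p)]
  rw [Fin.sum_univ_eq_sum_range (fun Q => ind (s + u Q = k)) (n + 1)]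
  exact cnt (n + 1) s k u hu

lemma sum_comp_fiberwise {γ : Type*} [Fintype γ] (N : ℕ) (h : ℕ → ℕ) (f : γ → ℕ)
    (hf : ∀ a, f a < N) :
    ∑ a, h (f a) = ∑ s ∈ range N, (Finset.univ.filter (fun a => f a = s)).card * h s := by
  rw [← Finset.sum_fiberwise_of_maps_to (t := range N) (g := f)
    (fun a _ => Finset.mem_range.mpr (hf a)) (fun a => h (f a))]
  apply Finset.sum_congr rfl
  intro s _
  rw [Finset.sum_congr rfl (fun a ha => by rw [(Finset.mem_filter.mp ha).2]),
    Finset.sum_const, smul_eq_mul]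

/-- transport a sum over a fintype along equal fiber cardinalities -/
lemma sum_comp_eq_of_fibers {α β : Type*} [Fintype α] [Fintype β]
    (f : α → ℕ) (g : β → ℕ) (N : ℕ) (hfN : ∀ a, f a < N) (hgN : ∀ b, g b < N)
    (hfib : ∀ s, (Finset.univ.filter (fun a => f a = s)).card
      = (Finset.univ.filter (fun b => g b = s)).card)
    (h : ℕ → ℕ) :
    ∑ a, h (f a) = ∑ b, h (g b) := by
  rw [sum_comp_fiberwise N h f hfN, sum_comp_fiberwise N h g hgN]
  exact Finset.sum_congr rfl (fun s _ => by rw [hfib s])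

end Helpers

lemma ite_eq_ind (P : Prop) [Decidable P] : (if P then (1:ℕ) else 0) = ind P := by
  by_cases h : P <;> simp [ind, h]

section Totals

variable (X Y : Set ℕ)

lemma tot_val {n : ℕ} (e : Equiv.Perm (Fin n)) :
    (∑ Q ∈ range (n + 1), ind (Q < n ∧ Q + 1 ∈ X ∧ word n e Q ∈ Y)) = vsN X Y n e := by
  rw [Finset.sum_range_succ, ind_false (fun hc => lt_irrefl n hc.1), add_zero]
  unfold vsN
  apply Finset.sum_congr rfl
  intro j hj
  rw [Finset.mem_range] at hj
  exact ind_congr (by tauto)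

lemma tot_adj {n : ℕ} (ρ : Equiv.Perm (Fin n)) :
    (∑ Q ∈ range (n + 1), ind (1 ≤ Q ∧ word n ρ (Q - 1) ∈ X ∧ word n ρ Q ∈ Y))
      = asN X Y n ρ := by
  rw [Finset.sum_range_succ']
  rw [ind_false (fun hc => absurd hc.1 (by omega)), add_zero]
  unfold asN
  apply Finset.sum_congr rfl
  intro j hj
  apply ind_congr
  constructor
  · rintro ⟨-, h1, h2⟩
    rw [Nat.add_sub_cancel] at h1
    exact ⟨h1, h2⟩
  · rintro ⟨h1, h2⟩
    exact ⟨by omega, by rwa [Nat.add_sub_cancel], h2⟩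

lemma tot_val_mem (S : Set ℕ) {n : ℕ} (e : Equiv.Perm (Fin n)) :
    (∑ Q ∈ range (n + 1), ind (Q < n ∧ word n e Q ∈ S))
      = ∑ j ∈ range n, ind ((j + 1 : ℕ) ∈ S) := by
  rw [Finset.sum_range_succ, ind_false (fun hc => lt_irrefl n hc.1), add_zero]
  rw [← sum_word_mem S n e]
  apply Finset.sum_congr rfl
  intro j hj
  rw [Finset.mem_range] at hj
  exact ind_congr (by tauto)

lemma tot_val_pos {n : ℕ} :
    (∑ Q ∈ range (n + 1), ind (Q < n ∧ Q + 1 ∈ X))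
      = ∑ j ∈ range n, ind ((j + 1 : ℕ) ∈ X) := by
  rw [Finset.sum_range_succ, ind_false (fun hc => lt_irrefl n hc.1), add_zero]
  apply Finset.sum_congr rfl
  intro j hj
  rw [Finset.mem_range] at hj
  exact ind_congr (by tauto)

lemma tot_adj_memY (S : Set ℕ) (h0 : (0 : ℕ) ∉ S) {n : ℕ} (ρ : Equiv.Perm (Fin n)) :
    (∑ Q ∈ range (n + 1), ind (word n ρ Q ∈ S))
      = ∑ j ∈ range n, ind ((j + 1 : ℕ) ∈ S) := by
  rw [Finset.sum_range_succ, word_ge _ _ (lt_irrefl n), ind_false h0, add_zero]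
  exact sum_word_mem S n ρ

lemma tot_adj_memX (S : Set ℕ) {n : ℕ} (ρ : Equiv.Perm (Fin n)) :
    (∑ Q ∈ range (n + 1), ind (1 ≤ Q ∧ word n ρ (Q - 1) ∈ S))
      = ∑ j ∈ range n, ind ((j + 1 : ℕ) ∈ S) := by
  rw [Finset.sum_range_succ']
  rw [ind_false (fun hc => absurd hc.1 (by omega)), add_zero]
  rw [← sum_word_mem S n ρ]
  apply Finset.sum_congr rfl
  intro j hj
  apply ind_congr
  constructor
  · rintro ⟨-, h1⟩
    rwa [Nat.add_sub_cancel] at h1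
  · intro h1
    exact ⟨by omega, by rwa [Nat.add_sub_cancel]⟩

end Totals

lemma main_count (X Y : Set ℕ) (hY0 : (0:ℕ) ∉ Y) (hd : ∀ m : ℕ, m ∈ X → m ∉ Y) :
    ∀ n k : ℕ,
      (Finset.univ.filter (fun σ : Equiv.Perm (Fin n) => vsN X Y n σ = k)).card =
      (Finset.univ.filter (fun σ : Equiv.Perm (Fin n) => asN X Y n σ = k)).card := by
  intro n
  induction n with
  | zero =>
    intro k
    simp [vsN, asN]
  | succ n ih =>
    intro k
    have assemble : ∀ (G : ℕ → ℕ),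
        (∀ e : Equiv.Perm (Fin n),
          ∑ p : Fin (n + 1), ind (vsN X Y (n + 1) (evalP p e) = k) = G (vsN X Y n e)) →
        (∀ ρ : Equiv.Perm (Fin n),
          ∑ q : Fin (n + 1), ind (asN X Y (n + 1) (ins q ρ) = k) = G (asN X Y n ρ)) →
        (Finset.univ.filter
            (fun σ : Equiv.Perm (Fin (n + 1)) => vsN X Y (n + 1) σ = k)).card =
        (Finset.univ.filter
            (fun σ : Equiv.Perm (Fin (n + 1)) => asN X Y (n + 1) σ = k)).card := by
      intro G hv ha
      rw [Finset.card_filter, Finset.card_filter]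
      rw [Finset.sum_congr rfl
        (fun (σ : Equiv.Perm (Fin (n+1))) _ => ite_eq_ind (vsN X Y (n+1) σ = k))]
      rw [Finset.sum_congr rfl
        (fun (σ : Equiv.Perm (Fin (n+1))) _ => ite_eq_ind (asN X Y (n+1) σ = k))]
      rw [← Fintype.sum_bijective _ evalP_bijective
        (fun x : Fin (n+1) × Equiv.Perm (Fin n) => ind (vsN X Y (n+1) (evalP x.1 x.2) = k))
        (fun σ => ind (vsN X Y (n+1) σ = k)) (fun x => rfl)]
      rw [← Fintype.sum_bijective _ ins_bijective
        (fun x : Fin (n+1) × Equiv.Perm (Fin n) => ind (asN X Y (n+1) (ins x.1 x.2) = k))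
        (fun σ => ind (asN X Y (n+1) σ = k)) (fun x => rfl)]
      rw [Fintype.sum_prod_type_right, Fintype.sum_prod_type_right]
      rw [Finset.sum_congr rfl (fun e _ => hv e), Finset.sum_congr rfl (fun ρ _ => ha ρ)]
      exact sum_comp_eq_of_fibers (vsN X Y n) (asN X Y n) (n + 1)
        (fun e => Nat.lt_succ_of_le (vsN_le X Y n e))
        (fun ρ => Nat.lt_succ_of_le (asN_le X Y n ρ)) ih (fun s => G s)
    by_cases hx : (n + 1 : ℕ) ∈ X
    · -- Case B : n+1 ∈ X, so n+1 ∉ Y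
      have hy : (n + 1 : ℕ) ∉ Y := hd _ hx
      apply assemble (fun s =>
        (if k = s then (n + 1) - ((∑ j ∈ range n, ind ((j+1:ℕ) ∈ Y)) - s) else 0) +
        (if k = s + 1 then (∑ j ∈ range n, ind ((j+1:ℕ) ∈ Y)) - s else 0))
      · -- val side
        intro e
        have hF : ∀ p : Fin (n + 1), vsN X Y (n + 1) (evalP p e)
            = vsN X Y n e
              + ind ((p:ℕ) < n ∧ word n e (p:ℕ) ∈ Y ∧ ¬ ((p:ℕ) + 1 ∈ X)) := by
          intro p
          by_cases hp : (p : ℕ) < n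
          · have h2 := vL2 X Y e p hp
            unfold ind at h2 ⊢
            split_ifs at h2 ⊢ <;> first | omega | tauto
          · have hpl : p = Fin.last n := by
              apply Fin.ext; have := p.isLt; simp only [Fin.val_last]; omega
            subst hpl
            have h1 := vL1 X Y e
            rw [ind_false (fun hc => hy hc.2)] at h1
            rw [ind_false (fun hc => lt_irrefl n (by simpa using hc.1))]
            omega
        have hcnt := inner_countB (k := k) (fun p => vsN X Y (n+1) (evalP p e))
          (fun Q => ind (Q < n ∧ word n e Q ∈ Y ∧ ¬ (Q + 1 ∈ X)))
          hF (fun Q => ind_le_one _)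
        rw [hcnt]
        have hsplit : (∑ Q ∈ range (n+1), ind (Q < n ∧ word n e Q ∈ Y ∧ ¬ (Q + 1 ∈ X)))
            + (∑ Q ∈ range (n+1), ind (Q < n ∧ Q + 1 ∈ X ∧ word n e Q ∈ Y))
            = ∑ Q ∈ range (n+1), ind (Q < n ∧ word n e Q ∈ Y) := by
          rw [← Finset.sum_add_distrib]
          apply Finset.sum_congr rfl
          intro Q _
          unfold ind
          split_ifs <;> first | omega | tauto
        rw [tot_val X Y e, tot_val_mem Y e] at hsplit
        have hU : (∑ Q ∈ range (n+1), ind (Q < n ∧ word n e Q ∈ Y ∧ ¬ (Q + 1 ∈ X)))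
            = (∑ j ∈ range n, ind ((j+1:ℕ) ∈ Y)) - vsN X Y n e := by omega
        rw [hU]
      · -- adj side
        intro ρ
        have hF : ∀ q : Fin (n + 1), asN X Y (n + 1) (ins q ρ)
            = asN X Y n ρ
              + ind (word n ρ (q:ℕ) ∈ Y ∧ ¬ (1 ≤ (q:ℕ) ∧ word n ρ ((q:ℕ) - 1) ∈ X)) := by
          intro q
          have h2 := aL2 X Y ρ q
          unfold ind at h2 ⊢
          split_ifs at h2 ⊢ <;> first | omega | tauto
        have hcnt := inner_countB (k := k) (fun q => asN X Y (n+1) (ins q ρ))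
          (fun Q => ind (word n ρ Q ∈ Y ∧ ¬ (1 ≤ Q ∧ word n ρ (Q - 1) ∈ X)))
          hF (fun Q => ind_le_one _)
        rw [hcnt]
        have hsplit : (∑ Q ∈ range (n+1),
              ind (word n ρ Q ∈ Y ∧ ¬ (1 ≤ Q ∧ word n ρ (Q - 1) ∈ X)))
            + (∑ Q ∈ range (n+1), ind (1 ≤ Q ∧ word n ρ (Q - 1) ∈ X ∧ word n ρ Q ∈ Y))
            = ∑ Q ∈ range (n+1), ind (word n ρ Q ∈ Y) := by
          rw [← Finset.sum_add_distrib]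
          apply Finset.sum_congr rfl
          intro Q _
          unfold ind
          split_ifs <;> first | omega | tauto
        rw [tot_adj X Y ρ, tot_adj_memY Y hY0 ρ] at hsplit
        have hU : (∑ Q ∈ range (n+1),
              ind (word n ρ Q ∈ Y ∧ ¬ (1 ≤ Q ∧ word n ρ (Q - 1) ∈ X)))
            = (∑ j ∈ range n, ind ((j+1:ℕ) ∈ Y)) - asN X Y n ρ := by omega
        rw [hU]
    · by_cases hy : (n + 1 : ℕ) ∈ Y
      · -- Case C : n+1 ∈ Y, n+1 ∉ X
        apply assemble (fun s =>
          (if k = s then (n + 1) - ((∑ j ∈ range n, ind ((j+1:ℕ) ∈ X)) - s) else 0) +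
          (if k = s + 1 then (∑ j ∈ range n, ind ((j+1:ℕ) ∈ X)) - s else 0))
        · -- val side
          intro e
          have hF : ∀ p : Fin (n + 1), vsN X Y (n + 1) (evalP p e)
              = vsN X Y n e
                + ind ((p:ℕ) < n ∧ (p:ℕ) + 1 ∈ X ∧ ¬ (word n e (p:ℕ) ∈ Y)) := by
            intro p
            by_cases hp : (p : ℕ) < n
            · have h2 := vL2 X Y e p hp
              unfold ind at h2 ⊢
              split_ifs at h2 ⊢ <;> first | omega | tauto
            · have hpl : p = Fin.last n := by
                apply Fin.ext; have := p.isLt; simp only [Fin.val_last]; omega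
              subst hpl
              have h1 := vL1 X Y e
              rw [ind_false (fun hc => hx hc.1)] at h1
              rw [ind_false (fun hc => lt_irrefl n (by simpa using hc.1))]
              omega
          have hcnt := inner_countB (k := k) (fun p => vsN X Y (n+1) (evalP p e))
            (fun Q => ind (Q < n ∧ Q + 1 ∈ X ∧ ¬ (word n e Q ∈ Y)))
            hF (fun Q => ind_le_one _)
          rw [hcnt]
          have hsplit : (∑ Q ∈ range (n+1), ind (Q < n ∧ Q + 1 ∈ X ∧ ¬ (word n e Q ∈ Y)))
              + (∑ Q ∈ range (n+1), ind (Q < n ∧ Q + 1 ∈ X ∧ word n e Q ∈ Y))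
              = ∑ Q ∈ range (n+1), ind (Q < n ∧ Q + 1 ∈ X) := by
            rw [← Finset.sum_add_distrib]
            apply Finset.sum_congr rfl
            intro Q _
            unfold ind
            split_ifs <;> first | omega | tauto
          rw [tot_val X Y e, tot_val_pos X] at hsplit
          have hU : (∑ Q ∈ range (n+1), ind (Q < n ∧ Q + 1 ∈ X ∧ ¬ (word n e Q ∈ Y)))
              = (∑ j ∈ range n, ind ((j+1:ℕ) ∈ X)) - vsN X Y n e := by omega
          rw [hU]
        · -- adj side
          intro ρ
          have hF : ∀ q : Fin (n + 1), asN X Y (n + 1) (ins q ρ)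
              = asN X Y n ρ
                + ind (1 ≤ (q:ℕ) ∧ word n ρ ((q:ℕ) - 1) ∈ X
                    ∧ ¬ (word n ρ (q:ℕ) ∈ Y)) := by
            intro q
            have h2 := aL2 X Y ρ q
            unfold ind at h2 ⊢
            split_ifs at h2 ⊢ <;> first | omega | tauto
          have hcnt := inner_countB (k := k) (fun q => asN X Y (n+1) (ins q ρ))
            (fun Q => ind (1 ≤ Q ∧ word n ρ (Q - 1) ∈ X ∧ ¬ (word n ρ Q ∈ Y)))
            hF (fun Q => ind_le_one _)
          rw [hcnt]
          have hsplit : (∑ Q ∈ range (n+1),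
                ind (1 ≤ Q ∧ word n ρ (Q - 1) ∈ X ∧ ¬ (word n ρ Q ∈ Y)))
              + (∑ Q ∈ range (n+1), ind (1 ≤ Q ∧ word n ρ (Q - 1) ∈ X ∧ word n ρ Q ∈ Y))
              = ∑ Q ∈ range (n+1), ind (1 ≤ Q ∧ word n ρ (Q - 1) ∈ X) := by
            rw [← Finset.sum_add_distrib]
            apply Finset.sum_congr rfl
            intro Q _
            unfold ind
            split_ifs <;> first | omega | tauto
          rw [tot_adj X Y ρ, tot_adj_memX X ρ] at hsplit
          have hU : (∑ Q ∈ range (n+1),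
                ind (1 ≤ Q ∧ word n ρ (Q - 1) ∈ X ∧ ¬ (word n ρ Q ∈ Y)))
              = (∑ j ∈ range n, ind ((j+1:ℕ) ∈ X)) - asN X Y n ρ := by omega
          rw [hU]
      · -- Case A : n+1 ∉ X, n+1 ∉ Y
        apply assemble (fun s =>
          (if s = k then (n + 1) - s else 0) + (if s = k + 1 then s else 0))
        · -- val side
          intro e
          have hF : ∀ p : Fin (n + 1), vsN X Y (n + 1) (evalP p e)
              + ind ((p:ℕ) < n ∧ (p:ℕ) + 1 ∈ X ∧ word n e (p:ℕ) ∈ Y) = vsN X Y n e := by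
            intro p
            by_cases hp : (p : ℕ) < n
            · have h2 := vL2 X Y e p hp
              unfold ind at h2 ⊢
              split_ifs at h2 ⊢ <;> first | omega | tauto
            · have hpl : p = Fin.last n := by
                apply Fin.ext; have := p.isLt; simp only [Fin.val_last]; omega
              subst hpl
              have h1 := vL1 X Y e
              rw [ind_false (fun hc => hy hc.2)] at h1
              rw [ind_false (fun hc => lt_irrefl n (by simpa using hc.1))]
              omega
          have hcnt := inner_countA (k := k) (fun p => vsN X Y (n+1) (evalP p e))
            (fun Q => ind (Q < n ∧ Q + 1 ∈ X ∧ word n e Q ∈ Y))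
            hF (fun Q => ind_le_one _)
          rw [hcnt, tot_val X Y e]
        · -- adj side
          intro ρ
          have hF : ∀ q : Fin (n + 1), asN X Y (n + 1) (ins q ρ)
              + ind (1 ≤ (q:ℕ) ∧ word n ρ ((q:ℕ) - 1) ∈ X ∧ word n ρ (q:ℕ) ∈ Y)
              = asN X Y n ρ := by
            intro q
            have h2 := aL2 X Y ρ q
            rw [ind_false (P := 1 ≤ (q:ℕ) ∧ word n ρ ((q:ℕ) - 1) ∈ X ∧ (n+1:ℕ) ∈ Y)
              (fun hc => hy hc.2.2),
              ind_false (P := (n+1:ℕ) ∈ X ∧ word n ρ (q:ℕ) ∈ Y) (fun hc => hx hc.1)] at h2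
            omega
          have hcnt := inner_countA (k := k) (fun q => asN X Y (n+1) (ins q ρ))
            (fun Q => ind (1 ≤ Q ∧ word n ρ (Q - 1) ∈ X ∧ word n ρ Q ∈ Y))
            hF (fun Q => ind_le_one _)
          rw [hcnt, tot_adj X Y ρ]

lemma count_set_eq (n : ℕ) (P : Fin n → Prop) :
    {i : Fin n | P i}.ncard = ∑ i : Fin n, ind (P i) := by
  rw [Set.ncard_eq_toFinset_card', Set.toFinset_setOf, Finset.card_filter]
  exact Finset.sum_congr rfl (fun i _ => ite_eq_ind _)

lemma valCount_eq_vsN (X Y : Set ℕ) (n : ℕ) (σ : Equiv.Perm (Fin n)) :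
    valCount X Y n σ = vsN X Y n σ := by
  unfold valCount
  rw [count_set_eq]
  unfold vsN
  rw [← Fin.sum_univ_eq_sum_range (fun j => ind (j + 1 ∈ X ∧ word n σ j ∈ Y)) n]
  apply Finset.sum_congr rfl
  intro i _
  exact ind_congr (by rw [word_lt _ _ i.isLt])

lemma adjCount_eq_asN (X Y : Set ℕ) (h0 : (0:ℕ) ∉ Y) (n : ℕ) (σ : Equiv.Perm (Fin n)) :
    adjCount X Y n σ = asN X Y n σ := by
  unfold adjCount
  rw [count_set_eq]
  unfold asN
  rw [← Fin.sum_univ_eq_sum_range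
    (fun j => ind (word n σ j ∈ X ∧ word n σ (j + 1) ∈ Y)) n]
  apply Finset.sum_congr rfl
  intro i _
  apply ind_congr
  by_cases h : (i : ℕ) + 1 < n
  · rw [word_lt _ _ i.isLt, word_lt _ _ h]
    constructor
    · rintro ⟨hh, hA, hB⟩
      exact ⟨hA, hB⟩
    · rintro ⟨hA, hB⟩
      exact ⟨h, hA, hB⟩
  · rw [word_ge _ _ h]
    constructor
    · rintro ⟨hh, -⟩
      exact absurd hh h
    · rintro ⟨-, hB⟩
      exact absurd hB h0

lemma natcard_filter (n : ℕ) (P : Equiv.Perm (Fin n) → Prop) :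
    Nat.card {σ : Equiv.Perm (Fin n) | P σ} = (Finset.univ.filter P).card := by
  rw [Nat.card_coe_set_eq, Set.ncard_eq_toFinset_card', Set.toFinset_setOf]

/-- Theorem 5: if `X ∩ Y = ∅`, then `V_{n,k}^{X,Y} = A_{n,k}^{X,Y}` for all `n, k`. -/
theorem V_eq_A (X Y : Set ℕ) (hX : 0 ∉ X) (hY : 0 ∉ Y) (hXY : X ∩ Y = ∅)
    (n : ℕ) (hn : 1 ≤ n) (k : ℕ) :
    V X Y n k = A X Y n k := by
  have hd : ∀ m : ℕ, m ∈ X → m ∉ Y := fun m hmX hmY =>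
    (Set.eq_empty_iff_forall_notMem.mp hXY m) ⟨hmX, hmY⟩
  unfold V A
  have s1 : {σ : Equiv.Perm (Fin n) | valCount X Y n σ = k}
      = {σ : Equiv.Perm (Fin n) | vsN X Y n σ = k} := by
    ext σ; simp only [Set.mem_setOf_eq, valCount_eq_vsN]
  have s2 : {σ : Equiv.Perm (Fin n) | adjCount X Y n σ = k}
      = {σ : Equiv.Perm (Fin n) | asN X Y n σ = k} := by
    ext σ; simp only [Set.mem_setOf_eq, adjCount_eq_asN X Y hY]
  rw [s1, s2, natcard_filter, natcard_filter]
  convert main_count X Y hY hd n k using 3
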